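/- Let P ∈ ℝ^{m×m} be symmetric positive definite, let φ > 0, and let x : [0, ∞) → ℝ^m be differentiable with the property that the function V(t) = (1/2)·x(t)ᵀP·x(t) satisfies V′(t) ≤ −φ·‖x(t)‖ for all t > 0. Then x(t) = 0 for every t ≥ (λmax(P)/φ)·‖x(0)‖. -/

import Mathlib

open Matrix

/-- Euclidean norm of a real vector. -/
noncomputable def eNorm {n : Type*} [Fintype n] (x : n → ℝ) : ℝ :=
  Real.sqrt (∑ i, x i ^ 2)

/-- Largest real eigenvalue of a real square matrix. -/
noncomputable def lmax {n : Type*} [Fintype n] (M : Matrix n n ℝ) : ℝ :=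
  sSup {μ : ℝ | ∃ x : n → ℝ, x ≠ 0 ∧ M.mulVec x = μ • x}

lemma quad_le_aux {m : ℕ} (P : Matrix (Fin m) (Fin m) ℝ) (hA : P.IsHermitian) (L : ℝ)
    (hL : ∀ i, hA.eigenvalues i ≤ L) (v : Fin m → ℝ) :
    v ⬝ᵥ P *ᵥ v ≤ L * ∑ i, v i ^ 2 := by
  classical
  set b := hA.eigenvectorBasis with hb
  set u : Fin m → Fin m → ℝ := fun i j => b i j with hu
  have hPt : Pᵀ = P := by
    have h3 := hA; rwa [Matrix.IsHermitian, conjTranspose_eq_transpose_of_trivial] at h3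
  have hPu : ∀ i, P *ᵥ u i = hA.eigenvalues i • u i := fun i => hA.mulVec_eigenvectorBasis i
  have h := b.sum_inner_mul_inner (x := WithLp.toLp 2 v) (y := WithLp.toLp 2 (P *ᵥ v))
  simp only [PiLp.inner_apply, RCLike.inner_apply, conj_trivial] at h
  have h' : ∑ i, (v ⬝ᵥ u i) * (u i ⬝ᵥ (P *ᵥ v)) = v ⬝ᵥ (P *ᵥ v) := by
    simpa only [dotProduct, hu, mul_comm] using h
  have hself := b.sum_inner_mul_inner (x := WithLp.toLp 2 v) (y := WithLp.toLp 2 v)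
  simp only [PiLp.inner_apply, RCLike.inner_apply, conj_trivial] at hself
  have hself' : ∑ i, (v ⬝ᵥ u i) * (u i ⬝ᵥ v) = v ⬝ᵥ v := by
    simpa only [dotProduct, hu, mul_comm] using hself
  have hstep : ∀ i, u i ⬝ᵥ (P *ᵥ v) = hA.eigenvalues i * (u i ⬝ᵥ v) := by
    intro i
    rw [dotProduct_mulVec, ← mulVec_transpose, hPt, hPu i, smul_dotProduct, smul_eq_mul]
  calc v ⬝ᵥ P *ᵥ v = ∑ i, hA.eigenvalues i * (u i ⬝ᵥ v) ^ 2 := by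
        rw [← h']
        refine Finset.sum_congr rfl fun i _ => ?_
        rw [hstep, dotProduct_comm v (u i)]; ring
    _ ≤ ∑ i, L * (u i ⬝ᵥ v) ^ 2 :=
        Finset.sum_le_sum fun i _ => mul_le_mul_of_nonneg_right (hL i) (sq_nonneg _)
    _ = L * (v ⬝ᵥ v) := by
        rw [← Finset.mul_sum, ← hself']
        congr 1
        exact Finset.sum_congr rfl fun i _ => by rw [dotProduct_comm v (u i)]; ring
    _ = L * ∑ i, v i ^ 2 := by congr 1; simp [dotProduct, sq]

lemma lmax_eq_aux {m : ℕ} (P : Matrix (Fin m) (Fin m) ℝ) (hA : P.IsHermitian)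
    (i0 : Fin m) (hi0 : ∀ i, hA.eigenvalues i ≤ hA.eigenvalues i0) :
    lmax P = hA.eigenvalues i0 := by
  classical
  set L := hA.eigenvalues i0 with hL
  set S := {μ : ℝ | ∃ x : Fin m → ℝ, x ≠ 0 ∧ P.mulVec x = μ • x} with hS
  have hmem : L ∈ S := by
    refine ⟨fun j => hA.eigenvectorBasis i0 j, ?_, hA.mulVec_eigenvectorBasis i0⟩
    intro h0
    exact hA.eigenvectorBasis.orthonormal.ne_zero i0 (WithLp.ofLp_injective 2 (funext fun j => congrFun h0 j))
  have hub : ∀ μ ∈ S, μ ≤ L := by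
    rintro μ ⟨w, hw0, hw⟩
    have hq := quad_le_aux P hA L (fun i => hi0 i) w
    have hdot : w ⬝ᵥ P *ᵥ w = μ * ∑ i, w i ^ 2 := by
      rw [hw, dotProduct_smul, smul_eq_mul]
      congr 1
      simp [dotProduct, sq]
    rw [hdot] at hq
    have hpos : 0 < ∑ i, w i ^ 2 := by
      rcases Function.ne_iff.mp hw0 with ⟨j, hj⟩
      have h1 : 0 < w j ^ 2 := pow_pos (abs_pos.mpr hj) 2 |>.trans_le (by rw [sq_abs])
      exact h1.trans_le (Finset.single_le_sum (fun i _ => sq_nonneg (w i)) (Finset.mem_univ j))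
    exact le_of_mul_le_mul_right hq hpos
  exact le_antisymm (csSup_le ⟨L, hmem⟩ hub) (le_csSup ⟨L, hub⟩ hmem)

/-- Finite-time convergence estimate: if `V(t) = (1/2) x(t)ᵀ P x(t)` decreases at rate
`V' ≤ −φ ‖x‖` with `P` symmetric positive definite, then `x(t) = 0` for all
`t ≥ (λmax(P)/φ) ‖x(0)‖`. -/
theorem stmt14 {m : ℕ} (P : Matrix (Fin m) (Fin m) ℝ) (hP : P.PosDef)
    (φ : ℝ) (hφ : 0 < φ) (x : ℝ → Fin m → ℝ)
    (hx : ∀ t, 0 ≤ t → DifferentiableAt ℝ x t)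
    (hV : ∀ t, 0 < t →
      deriv (fun s => (1 / 2 : ℝ) * (x s ⬝ᵥ P.mulVec (x s))) t ≤ -φ * eNorm (x t)) :
    ∀ t, (lmax P / φ) * eNorm (x 0) ≤ t → x t = 0 := by
  classical
  rcases Nat.eq_zero_or_pos m with hm | hm
  · subst hm
    intro t _
    funext i
    exact i.elim0
  haveI : Nonempty (Fin m) := ⟨⟨0, hm⟩⟩
  have hA := hP.isHermitian
  obtain ⟨i0, hi0⟩ := Finite.exists_max hA.eigenvalues
  set L := hA.eigenvalues i0 with hLdef
  have hlmax : lmax P = L := lmax_eq_aux P hA i0 hi0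
  have hL0 : 0 < L := hP.eigenvalues_pos i0
  have hquad : ∀ v : Fin m → ℝ, v ⬝ᵥ P *ᵥ v ≤ L * ∑ i, v i ^ 2 :=
    quad_le_aux P hA L hi0
  set V : ℝ → ℝ := fun s => (1 / 2 : ℝ) * (x s ⬝ᵥ P.mulVec (x s)) with hVdef
  -- positivity facts
  have hVnn : ∀ s, 0 ≤ V s := by
    intro s
    have := hP.posSemidef.dotProduct_mulVec_nonneg (x s)
    simp only [star_trivial] at this
    have h2 : (0:ℝ) ≤ x s ⬝ᵥ P *ᵥ x s := by simpa using this
    simp only [hVdef]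
    linarith
  have hVpos : ∀ s, x s ≠ 0 → 0 < V s := by
    intro s hs
    have := hP.dotProduct_mulVec_pos hs
    simp only [star_trivial] at this
    have h2 : (0:ℝ) < x s ⬝ᵥ P *ᵥ x s := by simpa using this
    simp only [hVdef]
    linarith
  have hVzero : ∀ s, V s = 0 → x s = 0 := by
    intro s hs
    by_contra h
    exact absurd hs (ne_of_gt (hVpos s h))
  -- differentiability of V
  have hVdiff : ∀ s, 0 ≤ s → DifferentiableAt ℝ V s := by
    intro s hs
    have hxi : ∀ i, DifferentiableAt ℝ (fun u => x u i) s := by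
      intro i
      exact (differentiableAt_pi.mp (hx s hs)) i
    have : V = fun u => (1/2 : ℝ) * ∑ i, x u i * ∑ j, P i j * x u j := by
      funext u
      simp [hVdef, dotProduct, Matrix.mulVec, Finset.mul_sum]
    rw [this]
    exact (differentiableAt_const _).mul (DifferentiableAt.fun_sum fun i _ =>
      (hxi i).mul (DifferentiableAt.fun_sum fun j _ => (differentiableAt_const _).mul (hxi j)))
  have hVcont : ContinuousOn V (Set.Ici (0:ℝ)) :=
    fun s hs => ((hVdiff s hs).continuousAt).continuousWithinAt
  -- eNorm nonneg
  have heNnn : ∀ v : Fin m → ℝ, 0 ≤ eNorm v := fun v => Real.sqrt_nonneg _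
  -- V is antitone on [0, ∞)
  have hVanti : AntitoneOn V (Set.Ici (0:ℝ)) := by
    refine antitoneOn_of_deriv_nonpos (convex_Ici 0) hVcont ?_ ?_
    · intro s hs
      rw [interior_Ici] at hs
      exact (hVdiff s (le_of_lt hs)).differentiableWithinAt
    · intro s hs
      rw [interior_Ici] at hs
      have := hV s hs
      have h2 : -φ * eNorm (x s) ≤ 0 := by
        have := mul_nonneg hφ.le (heNnn (x s))
        linarith
      exact le_trans this h2
  -- norm lower bound: eNorm (x s) ≥ sqrt (2 V s / L)
  have hnorm : ∀ s, Real.sqrt (2 * V s / L) ≤ eNorm (x s) := by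
    intro s
    have hq := hquad (x s)
    have h1 : 2 * V s / L ≤ ∑ i, x s i ^ 2 := by
      rw [div_le_iff₀ hL0]
      have h2 : 2 * V s = x s ⬝ᵥ P *ᵥ x s := by simp only [hVdef]; ring
      rw [h2]
      linarith [hq]
    exact Real.sqrt_le_sqrt h1
  -- main argument
  intro t ht
  rw [hlmax] at ht
  have ht0 : 0 ≤ t := le_trans (mul_nonneg (div_nonneg hL0.le hφ.le) (heNnn _)) ht
  by_contra hxt
  have hVt : 0 < V t := hVpos t hxt
  -- V positive on [0, t]
  have hVposIcc : ∀ s ∈ Set.Icc (0:ℝ) t, 0 < V s := by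
    rintro s ⟨hs0, hst⟩
    exact lt_of_lt_of_le hVt (hVanti hs0 ht0 hst)
  set c : ℝ := φ / Real.sqrt (2 * L) with hcdef
  have h2L : (0:ℝ) < 2 * L := by linarith
  have hsqrt2L : 0 < Real.sqrt (2 * L) := Real.sqrt_pos.mpr h2L
  have hc0 : 0 < c := div_pos hφ hsqrt2L
  set g : ℝ → ℝ := fun s => Real.sqrt (V s) + c * s with hgdef
  have hganti : AntitoneOn g (Set.Icc 0 t) := by
    refine antitoneOn_of_deriv_nonpos (convex_Icc 0 t) ?_ ?_ ?_
    · exact ((hVcont.mono (Set.Icc_subset_Ici_self)).sqrt).add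
        ((continuous_const.mul continuous_id).continuousOn)
    · intro s hs
      rw [interior_Icc] at hs
      have hVs : V s ≠ 0 := ne_of_gt (hVposIcc s ⟨hs.1.le, hs.2.le⟩)
      exact (((hVdiff s hs.1.le).sqrt hVs).add
        ((differentiableAt_const c).mul differentiableAt_id)).differentiableWithinAt
    · intro s hs
      rw [interior_Icc] at hs
      have hVsp : 0 < V s := hVposIcc s ⟨hs.1.le, hs.2.le⟩
      have hVs : V s ≠ 0 := ne_of_gt hVsp
      have hVd : HasDerivAt V (deriv V s) s := (hVdiff s hs.1.le).hasDerivAt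
      have hsq : HasDerivAt (fun u => Real.sqrt (V u))
          (deriv V s / (2 * Real.sqrt (V s))) s := hVd.sqrt hVs
      have hlin : HasDerivAt (fun u : ℝ => c * u) c s := by
        simpa using (hasDerivAt_id s).const_mul c
      have hg : HasDerivAt g (deriv V s / (2 * Real.sqrt (V s)) + c) s := hsq.add hlin
      rw [hg.deriv]
      -- show deriv V s / (2 √(V s)) + c ≤ 0
      have hd : deriv V s ≤ -φ * eNorm (x s) := hV s hs.1
      have hsV : 0 < Real.sqrt (V s) := Real.sqrt_pos.mpr hVsp
      have h2s : 0 < 2 * Real.sqrt (V s) := by linarith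
      rw [div_add' _ _ _ (ne_of_gt h2s), div_nonpos_iff]
      right
      constructor
      · -- deriv V s + c * (2 √(V s)) ≤ 0
        have hkey : c * (2 * Real.sqrt (V s)) ≤ φ * eNorm (x s) := by
          have hbd : Real.sqrt (2 * L) * Real.sqrt (2 * V s / L) = 2 * Real.sqrt (V s) := by
            rw [← Real.sqrt_mul h2L.le]
            rw [show 2 * L * (2 * V s / L) = (2 * Real.sqrt (V s)) ^ 2 by
              rw [mul_pow, Real.sq_sqrt hVsp.le]; field_simp]
            exact Real.sqrt_sq (by positivity)
          have h1 : c * (2 * Real.sqrt (V s)) = φ * Real.sqrt (2 * V s / L) := by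
            rw [hcdef, ← hbd]
            field_simp
          rw [h1]
          exact mul_le_mul_of_nonneg_left (hnorm s) hφ.le
        nlinarith [hd, hkey, mul_nonneg hφ.le (heNnn (x s))]
      · linarith
  -- conclude: g t ≤ g 0
  have hgt : g t ≤ g 0 := hganti (Set.left_mem_Icc.mpr ht0) (Set.right_mem_Icc.mpr ht0) ht0
  have hVtpos : 0 < Real.sqrt (V t) := Real.sqrt_pos.mpr hVt
  have hct : c * t < Real.sqrt (V 0) := by
    simp only [hgdef, mul_zero, add_zero] at hgt
    linarith
  -- but √(V 0) ≤ c * ((L/φ) * eNorm (x 0)) ≤ c * t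
  have hfinal : Real.sqrt (V 0) ≤ c * t := by
    have h1 : Real.sqrt (V 0) ≤ c * ((L / φ) * eNorm (x 0)) := by
      have hV0 : V 0 ≤ L / 2 * ∑ i, x 0 i ^ 2 := by
        have := hquad (x 0)
        simp only [hVdef]
        linarith
      have h2 : Real.sqrt (V 0) ≤ Real.sqrt (L / 2) * eNorm (x 0) := by
        rw [eNorm, ← Real.sqrt_mul (by positivity)]
        exact Real.sqrt_le_sqrt hV0
      have hL2 : Real.sqrt (L / 2) * Real.sqrt (2 * L) = L := by
        rw [← Real.sqrt_mul (by positivity)]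
        rw [show L / 2 * (2 * L) = L ^ 2 by ring]
        exact Real.sqrt_sq hL0.le
      have h5 : c * (L / φ) = Real.sqrt (L / 2) := by
        have h6 : (φ / Real.sqrt (2 * L)) * (L / φ) = L / Real.sqrt (2 * L) := by
          field_simp
        rw [hcdef, h6, div_eq_iff hsqrt2L.ne']
        linarith [hL2]
      have h3 : c * ((L / φ) * eNorm (x 0)) = Real.sqrt (L / 2) * eNorm (x 0) := by
        rw [← h5]; ring
      rw [h3]
      exact h2
    have h4 : c * ((L / φ) * eNorm (x 0)) ≤ c * t := mul_le_mul_of_nonneg_left ht hc0.le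
    linarith
  linarith
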